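/- For λ = 0, the solution space of the characteristic (wave) system, i.e. the subspace S₀ = {(δn, δT, δU) ∈ ℝ × ℝ × ℝ⁴ : η(U, δU) = 0, equations (E1) and (E2) hold with λ = 0}, is a linear subspace of ℝ⁶ of dimension 3; equivalently, with λ = 0 the system reduces to η(ν, δU) = 0 and T δn + n δT = 0. -/

import Mathlib

open MeasureTheory Real Filter Set

/-- The Minkowski bilinear form on `ℝ⁴`. -/
def eta (x y : Fin 4 → ℝ) : ℝ :=
  x 0 * y 0 - x 1 * y 1 - x 2 * y 2 - x 3 * y 3

/-- The characteristic (wave) system of the relativistic Euler equations with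
energy `e = r·p`, for the characteristic speed `lam` (in light speed units), in the
unknowns `v = (δn, δT, δU)`, including the linearized constraint `η(U, δU) = 0`. -/
def WaveSol (c n T r lam : ℝ) (U ν : Fin 4 → ℝ) (v : ℝ × ℝ × (Fin 4 → ℝ)) : Prop :=
  eta U v.2.2 = 0 ∧
  -- (E1)
  (-(lam * c) * v.1 + n * eta ν v.2.2 = 0) ∧
  -- (E2)
  (∀ β : Fin 4,
    -(ν β) * (T * v.1 + n * v.2.1) + n * T * ((r + 1) / c ^ 2) * U β * eta ν v.2.2
      - (lam / c) * (r * U β * (T * v.1 + n * v.2.1) + n * T * (r + 1) * v.2.2 β) = 0)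

/-- Auxiliary linear map whose kernel is the λ = 0 solution space. -/
def waveF (n T : ℝ) (U ν : Fin 4 → ℝ) :
    (ℝ × ℝ × (Fin 4 → ℝ)) →ₗ[ℝ] ℝ × ℝ × ℝ where
  toFun v := (eta U v.2.2, eta ν v.2.2, T * v.1 + n * v.2.1)
  map_add' a b := by
    simp only [eta, Prod.snd_add, Prod.fst_add, Pi.add_apply, Prod.mk_add_mk]
    refine Prod.ext ?_ (Prod.ext ?_ ?_) <;> simp <;> ring
  map_smul' m a := by
    simp only [eta, Prod.smul_snd, Prod.smul_fst, Pi.smul_apply, smul_eq_mul,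
      Prod.smul_mk, RingHom.id_apply]
    refine Prod.ext ?_ (Prod.ext ?_ ?_) <;> simp <;> ring

/-- For `λ = 0` the solution space of the characteristic system is a linear subspace
of dimension `3`; equivalently the system reduces to `η(ν, δU) = 0` and
`T δn + n δT = 0` (together with the constraint `η(U, δU) = 0`). -/
theorem wave_system_lambda_zero (c n T r : ℝ) (hc : 0 < c) (hn : 0 < n) (hT : 0 < T)
    (hr : 0 < r) (U ν : Fin 4 → ℝ) (hU : eta U U = c ^ 2) (hν : eta ν ν = -1)
    (hUν : eta U ν = 0) :
    (∀ v : ℝ × ℝ × (Fin 4 → ℝ),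
      WaveSol c n T r 0 U ν v ↔
        (eta U v.2.2 = 0 ∧ eta ν v.2.2 = 0 ∧ T * v.1 + n * v.2.1 = 0)) ∧
    ∃ S₀ : Submodule ℝ (ℝ × ℝ × (Fin 4 → ℝ)),
      (S₀ : Set (ℝ × ℝ × (Fin 4 → ℝ))) = {v | WaveSol c n T r 0 U ν v} ∧
      Module.finrank ℝ S₀ = 3 := by
  have hiff : ∀ v : ℝ × ℝ × (Fin 4 → ℝ),
      WaveSol c n T r 0 U ν v ↔
        (eta U v.2.2 = 0 ∧ eta ν v.2.2 = 0 ∧ T * v.1 + n * v.2.1 = 0) := by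
    intro v
    constructor
    · rintro ⟨h1, h2, h3⟩
      have hην : eta ν v.2.2 = 0 := by
        have : n * eta ν v.2.2 = 0 := by linarith [h2]
        exact (mul_eq_zero.mp this).resolve_left hn.ne'
      refine ⟨h1, hην, ?_⟩
      by_contra hs
      have hνz : ∀ β : Fin 4, ν β = 0 := by
        intro β
        have h := h3 β
        rw [hην] at h
        simp only [zero_div, neg_zero, zero_mul, mul_zero, sub_zero, add_zero] at h
        have : -(ν β) * (T * v.1 + n * v.2.1) = 0 := by linarith
        rcases mul_eq_zero.mp this with h' | h'
        · linarith
        · exact absurd h' hs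
      have : eta ν ν = 0 := by simp [eta, hνz]
      rw [hν] at this; norm_num at this
    · rintro ⟨h1, h2, h3⟩
      refine ⟨h1, by simp [h2], fun β => by simp [h2, h3]⟩
  refine ⟨hiff, ⟨LinearMap.ker (waveF n T U ν), ?_, ?_⟩⟩
  · ext v
    simp only [SetLike.mem_coe, LinearMap.mem_ker, Set.mem_setOf_eq, hiff v, waveF,
      LinearMap.coe_mk, AddHom.coe_mk, Prod.mk_eq_zero]
  · have hsurj : Function.Surjective (waveF n T U ν) := by
      rintro ⟨a, b, d⟩
      refine ⟨(d / T, 0, fun β => (a / c ^ 2) * U β - b * ν β), ?_⟩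
      simp only [waveF, LinearMap.coe_mk, AddHom.coe_mk]
      simp only [Prod.mk.injEq]
      refine ⟨?_, ?_, ?_⟩
      · simp only [eta] at hU hUν ⊢
        field_simp
        linear_combination a*hU - c^2*b*hUν
      · simp only [eta] at hν hUν ⊢
        field_simp
        linear_combination a*hUν - c^2*b*hν
      · field_simp
        ring
    have h1 := LinearMap.finrank_range_add_finrank_ker (waveF n T U ν)
    rw [LinearMap.range_eq_top.mpr hsurj] at h1
    have hdom : Module.finrank ℝ (ℝ × ℝ × (Fin 4 → ℝ)) = 6 := by
      simp [Module.finrank_prod]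
    have htop : Module.finrank ℝ (⊤ : Submodule ℝ (ℝ × ℝ × ℝ)) = 3 := by
      simp [finrank_top, Module.finrank_prod]
    omega
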